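/- Let P be a finite-dimensional real vector space of polynomials, and for each type t in a finite totally-ordered index set T let Q_t ≥ 0 be reals with \sum_{t∈T} Q_t = 1. Suppose there exist constants K ≥ 1 and a quantity R ≥ 0 such that for the first type, R ≥ Q_{t_1}, and for each subsequent type t_i, R ≥ Q_{t_i} - K\sqrt{Q_{t_1} + ... + Q_{t_{i-1}}}. Then R ≥ δ(K, |T|) for some explicit δ(K,n) > 0 depending only on K and n = |T| (for instance δ = (1/(2K+2))^{2^n} works). -/

import Mathlib

theorem stmt19 (n : ℕ) (hn : 0 < n) (Q : Fin n → ℝ) (K R : ℝ)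
    (hQ0 : ∀ i, 0 ≤ Q i) (hQ1 : ∑ i, Q i = 1) (hK : 1 ≤ K) (hR : 0 ≤ R)
    (h1 : Q ⟨0, hn⟩ ≤ R)
    (h2 : ∀ i : Fin n,
      Q i - K * Real.sqrt (∑ j ∈ Finset.univ.filter (· < i), Q j) ≤ R) :
    (1 / (2 * K + 2)) ^ (2 ^ n) ≤ R := by
  by_contra hcon
  push_neg at hcon
  set ε : ℝ := 1 / (2 * K + 2) with hε
  have hKpos : (0:ℝ) < 2 * K + 2 := by linarith
  have hεpos : 0 < ε := by positivity
  have hε4 : ε ≤ 1 / 4 := by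
    rw [hε, div_le_div_iff₀ hKpos (by norm_num)]; linarith
  have hε1 : ε ≤ 1 := by linarith
  have hKε : K * ε ≤ 1 / 2 := by
    rw [hε, mul_one_div, div_le_div_iff₀ hKpos (by norm_num)]; linarith
  set S : ℕ → ℝ := fun k => ∑ j ∈ Finset.univ.filter (fun j : Fin n => (j : ℕ) < k), Q j with hS
  have hS0 : ∀ k, 0 ≤ S k := fun k => Finset.sum_nonneg fun j _ => hQ0 j
  have hSsucc : ∀ k (hk : k < n), S (k + 1) = S k + Q ⟨k, hk⟩ := by
    intro k hk
    have hins : (Finset.univ.filter (fun j : Fin n => (j : ℕ) < k + 1))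
        = insert ⟨k, hk⟩ (Finset.univ.filter (fun j : Fin n => (j : ℕ) < k)) := by
      ext j
      simp [Nat.lt_succ_iff_lt_or_eq, Fin.ext_iff]
      constructor <;> intro h <;> omega
    rw [hS]
    simp only [hins]
    rw [Finset.sum_insert (by simp)]
    ring
  have hSn : S n = 1 := by
    rw [hS]
    simp only []
    rw [← hQ1]
    congr 1
    apply Finset.filter_true_of_mem
    intro j _; exact j.isLt
  have h2' : ∀ (k : ℕ) (hk : k < n), Q ⟨k, hk⟩ ≤ R + K * Real.sqrt (S k) := by
    intro k hk
    have := h2 ⟨k, hk⟩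
    have hf : (Finset.univ.filter (· < (⟨k, hk⟩ : Fin n)))
        = Finset.univ.filter (fun j : Fin n => (j : ℕ) < k) := by
      apply Finset.filter_congr
      intro j _
      simp [Fin.lt_def]
    rw [hf] at this
    linarith [this]
  have hRδ : R < ε ^ (2 ^ n) := hcon
  have hSzero : S 0 = 0 := by
    rw [hS]; apply Finset.sum_eq_zero; intro j hj; simp at hj
  have hQ0R : Q ⟨0, hn⟩ ≤ R := by
    have := h2' 0 hn
    rw [hSzero, Real.sqrt_zero] at this
    linarith
  clear hS hε hcon h2 h1
  clear_value S ε
  -- main induction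
  have main : ∀ k, 1 ≤ k → k ≤ n → S k ≤ ε ^ (2 ^ (n + 1 - k) - 2) := by
    intro k
    induction k with
    | zero => omega
    | succ k ih =>
      intro _ hkn
      rcases Nat.eq_zero_or_pos k with hk0 | hk1
      · subst hk0
        have : S 1 = Q ⟨0, hn⟩ := by rw [hSsucc 0 hn, hSzero]; ring
        rw [this]
        calc Q ⟨0, hn⟩ ≤ R := hQ0R
          _ ≤ ε ^ (2 ^ n) := le_of_lt hRδ
          _ ≤ ε ^ (2 ^ (n + 1 - 1) - 2) := by
              apply pow_le_pow_of_le_one hεpos.le hε1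
              have hnn : n + 1 - 1 = n := by omega
              rw [hnn]
              exact Nat.sub_le _ _
      · have hkn' : k < n := by omega
        have hih := ih hk1 (le_of_lt hkn')
        set m : ℕ := 2 ^ (n - k) - 1 with hm
        have hnk : 1 ≤ n - k := by omega
        have hm1 : 1 ≤ m := by
          have : 2 ≤ 2 ^ (n - k) := by
            calc 2 = 2 ^ 1 := rfl
              _ ≤ 2 ^ (n - k) := Nat.pow_le_pow_right (by norm_num) hnk
          omega
        have hexp : 2 ^ (n + 1 - k) - 2 = 2 * m := by
          have h1' : n + 1 - k = (n - k) + 1 := by omega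
          rw [h1', pow_succ, hm]
          have : 2 ≤ 2 ^ (n - k) := by
            calc 2 = 2 ^ 1 := rfl
              _ ≤ 2 ^ (n - k) := Nat.pow_le_pow_right (by norm_num) hnk
          omega
        have htgt : 2 ^ (n + 1 - (k + 1)) - 2 = m - 1 := by
          have : n + 1 - (k + 1) = n - k := by omega
          rw [this, hm]
          omega
        rw [htgt]
        have hsqrt : Real.sqrt (S k) ≤ ε ^ m := by
          have h1' : Real.sqrt (S k) ≤ Real.sqrt (ε ^ (2 * m)) := by
            apply Real.sqrt_le_sqrt
            rw [← hexp]; exact hih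
          have h2'' : Real.sqrt (ε ^ (2 * m)) = ε ^ m := by
            rw [pow_mul']
            exact Real.sqrt_sq (pow_nonneg hεpos.le m)
          rw [h2''] at h1'
          exact h1'
        have hQk : Q ⟨k, hkn'⟩ ≤ R + K * ε ^ m := by
          have := h2' k hkn'
          have hKnn : 0 ≤ K := by linarith
          nlinarith [this, mul_le_mul_of_nonneg_left hsqrt hKnn]
        rw [hexp] at hih
        have hSk1 : S (k + 1) ≤ ε ^ (2 * m) + R + K * ε ^ m := by
          rw [hSsucc k hkn']
          linarith [hih, hQk]
        -- now bound each term by fractions of ε ^ (m - 1)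
        have hεm1 : (0:ℝ) < ε ^ (m - 1) := by positivity
        have hmsplit : m = (m - 1) + 1 := by omega
        have hεm : ε ^ m = ε ^ (m - 1) * ε := by
          rw [← pow_succ, ← hmsplit]
        have hb1 : ε ^ (2 * m) ≤ (1/4) * ε ^ (m - 1) := by
          calc ε ^ (2 * m) ≤ ε ^ m := by
                apply pow_le_pow_of_le_one hεpos.le hε1; omega
            _ = ε ^ (m - 1) * ε := hεm
            _ ≤ ε ^ (m - 1) * (1/4) := by
                apply mul_le_mul_of_nonneg_left hε4 hεm1.le
            _ = (1/4) * ε ^ (m - 1) := by ring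
        have hb2 : R ≤ (1/4) * ε ^ (m - 1) := by
          calc R ≤ ε ^ (2 ^ n) := hRδ.le
            _ ≤ ε ^ m := by
                apply pow_le_pow_of_le_one hεpos.le hε1
                have : m ≤ 2 ^ (n - k) := by omega
                have h2nk : 2 ^ (n - k) ≤ 2 ^ n := Nat.pow_le_pow_right (by norm_num) (by omega)
                omega
            _ = ε ^ (m - 1) * ε := hεm
            _ ≤ (1/4) * ε ^ (m - 1) := by nlinarith
        have hb3 : K * ε ^ m ≤ (1/2) * ε ^ (m - 1) := by
          rw [hεm]
          calc K * (ε ^ (m - 1) * ε) = (K * ε) * ε ^ (m - 1) := by ring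
            _ ≤ (1/2) * ε ^ (m - 1) := by nlinarith
        linarith [hSk1]
  -- final contradiction
  rcases Nat.lt_or_ge n 2 with hn2 | hn2
  · -- n = 1
    have hn1 : n = 1 := by omega
    subst hn1
    have : S 1 = 1 := hSn
    have hq : S 1 = Q ⟨0, hn⟩ := by rw [hSsucc 0 hn, hSzero]; ring
    have : (1:ℝ) ≤ R := by rw [← this, hq]; exact hQ0R
    have : ε ^ (2 ^ 1) ≤ 1 := by
      calc ε ^ 2 ≤ 1 ^ 2 := by apply pow_le_pow_left₀ hεpos.le hε1
        _ = 1 := one_pow 2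
    linarith
  · have hmain := main (n - 1) (by omega) (by omega)
    have hexp : 2 ^ (n + 1 - (n - 1)) - 2 = 2 := by
      have : n + 1 - (n - 1) = 2 := by omega
      rw [this]
      norm_num
    rw [hexp] at hmain
    have hkn' : n - 1 < n := by omega
    have hQlast := h2' (n - 1) hkn'
    have hsum : S n = S (n - 1) + Q ⟨n - 1, hkn'⟩ := by
      have h := hSsucc (n - 1) hkn'
      have hn1 : n - 1 + 1 = n := by omega
      rw [hn1] at h
      exact h
    have hsqrt : Real.sqrt (S (n - 1)) ≤ ε := by
      calc Real.sqrt (S (n - 1)) ≤ Real.sqrt (ε ^ 2) := Real.sqrt_le_sqrt hmain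
        _ = ε := by rw [Real.sqrt_sq hεpos.le]
    have hδε2 : ε ^ (2 ^ n) ≤ ε ^ 2 := by
      apply pow_le_pow_of_le_one hεpos.le hε1
      calc 2 = 2 ^ 1 := rfl
        _ ≤ 2 ^ n := Nat.pow_le_pow_right (by norm_num) (by omega)
    have hKnn : (0:ℝ) ≤ K := by linarith
    have hKs : K * Real.sqrt (S (n - 1)) ≤ K * ε := mul_le_mul_of_nonneg_left hsqrt hKnn
    have hε2 : ε ^ 2 ≤ 1/16 := by nlinarith
    have h1' : S (n - 1) + Q ⟨n - 1, hkn'⟩ = 1 := hsum.symm.trans hSn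
    linarith [hQlast, hKs, hKε, hε2, hmain, hδε2, hRδ, h1']
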